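/- Let m ∈ ℕ and for each j = 1,…,m let P_j and Q_j be probability measures with densities p_j and q_j with respect to σ-finite dominating measures μ_j on (Ω_j, F_j), and suppose the Chernoff information satisfies C(P_j, Q_j) ≤ ε_j for some ε_j ≥ 0. Then the product measures satisfy C(P_1 ⊗ ⋯ ⊗ P_m, Q_1 ⊗ ⋯ ⊗ Q_m) ≤ ε_1 + ⋯ + ε_m; that is, ε_j-Chernoff differential privacy composes sequentially with total privacy budget Σ_j ε_j. -/

import Mathlib

open MeasureTheory Real

section Aux

variable {Ω : Type*} [MeasurableSpace Ω] {μ : Measure Ω} {p q : Ω → ℝ}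

lemma aux_pointwise_le {a : ℝ} (ha : a ∈ Set.Ioo (0:ℝ) 1) (x : Ω)
    (hp0 : 0 ≤ p x) (hq0 : 0 ≤ q x) :
    min (p x) (q x) ≤ p x ^ a * q x ^ (1 - a) ∧ p x ^ a * q x ^ (1 - a) ≤ p x + q x := by
  have hm0 : (0:ℝ) ≤ min (p x) (q x) := le_min hp0 hq0
  have hs0 : (0:ℝ) ≤ p x + q x := add_nonneg hp0 hq0
  have h1 : a + (1 - a) ≠ 0 := by norm_num
  constructor
  · calc min (p x) (q x) = min (p x) (q x) ^ (a + (1 - a)) := by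
          rw [show a + (1-a) = 1 by ring, Real.rpow_one]
      _ = min (p x) (q x) ^ a * min (p x) (q x) ^ (1 - a) := Real.rpow_add' hm0 h1
      _ ≤ p x ^ a * q x ^ (1 - a) := by
          apply mul_le_mul
          · exact Real.rpow_le_rpow hm0 (min_le_left _ _) ha.1.le
          · exact Real.rpow_le_rpow hm0 (min_le_right _ _) (by linarith [ha.2])
          · exact Real.rpow_nonneg hm0 _
          · exact Real.rpow_nonneg hp0 _
  · calc p x ^ a * q x ^ (1 - a) ≤ (p x + q x) ^ a * (p x + q x) ^ (1 - a) := by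
          apply mul_le_mul
          · exact Real.rpow_le_rpow hp0 (by linarith) ha.1.le
          · exact Real.rpow_le_rpow hq0 (by linarith) (by linarith [ha.2])
          · exact Real.rpow_nonneg hq0 _
          · exact Real.rpow_nonneg hs0 _
      _ = (p x + q x) ^ (a + (1 - a)) := (Real.rpow_add' hs0 h1).symm
      _ = p x + q x := by rw [show a + (1-a) = 1 by ring, Real.rpow_one]

lemma aux_integrable (hp : Measurable p) (hq : Measurable q)
    (hp0 : ∀ x, 0 ≤ p x) (hq0 : ∀ x, 0 ≤ q x)
    (hpi : Integrable p μ) (hqi : Integrable q μ) {a : ℝ} (ha : a ∈ Set.Ioo (0:ℝ) 1) :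
    Integrable (fun x => p x ^ a * q x ^ (1 - a)) μ := by
  have hmeas : Measurable (fun x => p x ^ a * q x ^ (1 - a)) := by fun_prop
  apply Integrable.mono (hpi.add hqi) hmeas.aestronglyMeasurable
  filter_upwards with x
  have h := aux_pointwise_le ha x (hp0 x) (hq0 x)
  have h0 : (0:ℝ) ≤ p x ^ a * q x ^ (1 - a) :=
    mul_nonneg (Real.rpow_nonneg (hp0 x) _) (Real.rpow_nonneg (hq0 x) _)
  simp only [Pi.add_apply, Real.norm_eq_abs, abs_of_nonneg h0,
    abs_of_nonneg (add_nonneg (hp0 x) (hq0 x))]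
  exact h.2

lemma aux_term_le (hp : Measurable p) (hq : Measurable q)
    (hp0 : ∀ x, 0 ≤ p x) (hq0 : ∀ x, 0 ≤ q x)
    (hpi : Integrable p μ) (hqi : Integrable q μ) {a : ℝ} (ha : a ∈ Set.Ioo (0:ℝ) 1) :
    - Real.log (∫ x, p x ^ a * q x ^ (1 - a) ∂μ)
      ≤ - Real.log (∫ x, min (p x) (q x) ∂μ) := by
  have hmInt : Integrable (fun x => min (p x) (q x)) μ := hpi.inf hqi
  have hm0 : ∀ x, 0 ≤ min (p x) (q x) := fun x => le_min (hp0 x) (hq0 x)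
  have hle : (∫ x, min (p x) (q x) ∂μ) ≤ ∫ x, p x ^ a * q x ^ (1 - a) ∂μ :=
    integral_mono hmInt (aux_integrable hp hq hp0 hq0 hpi hqi ha)
      (fun x => (aux_pointwise_le ha x (hp0 x) (hq0 x)).1)
  have hc0 : 0 ≤ ∫ x, min (p x) (q x) ∂μ := integral_nonneg hm0
  rcases hc0.lt_or_eq with hc | hc
  · exact neg_le_neg (Real.log_le_log hc hle)
  · -- c = 0 : then the integrand is a.e. zero, both sides are 0
    have hmz : (fun x => min (p x) (q x)) =ᵐ[μ] 0 :=
      (integral_eq_zero_iff_of_nonneg hm0 hmInt).mp hc.symm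
    have hIz : (∫ x, p x ^ a * q x ^ (1 - a) ∂μ) = 0 := by
      rw [integral_eq_zero_iff_of_nonneg
        (fun x => mul_nonneg (Real.rpow_nonneg (hp0 x) _) (Real.rpow_nonneg (hq0 x) _))
        (aux_integrable hp hq hp0 hq0 hpi hqi ha)]
      filter_upwards [hmz] with x hx
      simp only [Pi.zero_apply] at hx ⊢
      rcases min_eq_iff.mp hx with ⟨hpx, _⟩ | ⟨hqx, _⟩
      · rw [hpx, Real.zero_rpow (ne_of_gt ha.1), zero_mul]
      · rw [hqx, Real.zero_rpow (ne_of_gt (by linarith [ha.2])), mul_zero]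
    rw [hIz, ← hc, Real.log_zero]

lemma aux_bddAbove (hp : Measurable p) (hq : Measurable q)
    (hp0 : ∀ x, 0 ≤ p x) (hq0 : ∀ x, 0 ≤ q x)
    (hpi : Integrable p μ) (hqi : Integrable q μ) :
    BddAbove (Set.range fun α : Set.Ioo (0:ℝ) 1 =>
      - Real.log (∫ x, p x ^ (α : ℝ) * q x ^ (1 - (α : ℝ)) ∂μ)) := by
  refine ⟨- Real.log (∫ x, min (p x) (q x) ∂μ), ?_⟩
  rintro y ⟨⟨a, ha⟩, rfl⟩
  exact aux_term_le hp hq hp0 hq0 hpi hqi ha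

end Aux

theorem chernoffDP_composition {m : ℕ} {Ω : Fin m → Type*} [∀ j, MeasurableSpace (Ω j)]
    (μ : ∀ j, Measure (Ω j)) [∀ j, SigmaFinite (μ j)]
    (P Q : ∀ j, Measure (Ω j)) [∀ j, IsProbabilityMeasure (P j)]
    [∀ j, IsProbabilityMeasure (Q j)]
    (p q : ∀ j, Ω j → ℝ)
    (hp : ∀ j, Measurable (p j)) (hq : ∀ j, Measurable (q j))
    (hp0 : ∀ j x, 0 ≤ p j x) (hq0 : ∀ j x, 0 ≤ q j x)
    (hP : ∀ j, P j = (μ j).withDensity (fun x => ENNReal.ofReal (p j x)))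
    (hQ : ∀ j, Q j = (μ j).withDensity (fun x => ENNReal.ofReal (q j x)))
    (ε : Fin m → ℝ) (hε : ∀ j, 0 ≤ ε j)
    (hC : ∀ j, (⨆ α : Set.Ioo (0 : ℝ) 1,
        - Real.log (∫ x, p j x ^ (α : ℝ) * q j x ^ (1 - (α : ℝ)) ∂(μ j))) ≤ ε j) :
    (⨆ α : Set.Ioo (0 : ℝ) 1,
        - Real.log (∫ x, (∏ j, p j (x j)) ^ (α : ℝ) * (∏ j, q j (x j)) ^ (1 - (α : ℝ))
          ∂(Measure.pi μ))) ≤ ∑ j, ε j := by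
  haveI : Nonempty (Set.Ioo (0:ℝ) 1) := ⟨⟨1/2, by norm_num⟩⟩
  -- integrability of densities
  have hpi : ∀ j, Integrable (p j) (μ j) := by
    intro j
    refine ⟨(hp j).aestronglyMeasurable, ?_⟩
    rw [hasFiniteIntegral_iff_ofReal (Filter.Eventually.of_forall (hp0 j))]
    have : (∫⁻ x, ENNReal.ofReal (p j x) ∂(μ j)) = 1 := by
      have := measure_univ (μ := P j)
      rwa [hP j, withDensity_apply _ MeasurableSet.univ, setLIntegral_univ] at this
    simp [this]
  have hqi : ∀ j, Integrable (q j) (μ j) := by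
    intro j
    refine ⟨(hq j).aestronglyMeasurable, ?_⟩
    rw [hasFiniteIntegral_iff_ofReal (Filter.Eventually.of_forall (hq0 j))]
    have : (∫⁻ x, ENNReal.ofReal (q j x) ∂(μ j)) = 1 := by
      have := measure_univ (μ := Q j)
      rwa [hQ j, withDensity_apply _ MeasurableSet.univ, setLIntegral_univ] at this
    simp [this]
  -- each term of each factor is bounded by ε j
  have hterm : ∀ j, ∀ a ∈ Set.Ioo (0:ℝ) 1,
      - Real.log (∫ x, p j x ^ a * q j x ^ (1 - a) ∂(μ j)) ≤ ε j := by
    intro j a ha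
    refine le_trans ?_ (hC j)
    exact le_ciSup (aux_bddAbove (hp j) (hq j) (hp0 j) (hq0 j) (hpi j) (hqi j)) ⟨a, ha⟩
  apply ciSup_le
  rintro ⟨a, ha⟩
  -- rewrite the product integral
  have hrw : (∫ x, (∏ j, p j (x j)) ^ a * (∏ j, q j (x j)) ^ (1 - a) ∂(Measure.pi μ))
      = ∏ j, ∫ x, p j x ^ a * q j x ^ (1 - a) ∂(μ j) := by
    letI : ∀ j, MeasureSpace (Ω j) := fun j => ⟨μ j⟩
    have hv : Measure.pi μ = (volume : Measure (∀ j, Ω j)) := rfl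
    rw [hv]
    rw [show (fun x : ∀ j, Ω j => (∏ j, p j (x j)) ^ a * (∏ j, q j (x j)) ^ (1 - a))
        = fun x : ∀ j, Ω j => ∏ j, (p j (x j) ^ a * q j (x j) ^ (1 - a)) from ?_]
    · exact MeasureTheory.integral_fintype_prod_eq_prod (μ := μ)
        (fun j y => p j y ^ a * q j y ^ (1 - a))
    · funext x
      rw [← Real.finset_prod_rpow _ _ (fun j _ => hp0 j (x j)) a,
        ← Real.finset_prod_rpow _ _ (fun j _ => hq0 j (x j)) (1 - a),
        Finset.prod_mul_distrib]
  rw [hrw]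
  by_cases hz : ∀ j, (∫ x, p j x ^ a * q j x ^ (1 - a) ∂(μ j)) ≠ 0
  · rw [Real.log_prod (fun j _ => hz j), ← Finset.sum_neg_distrib]
    exact Finset.sum_le_sum (fun j _ => hterm j a ha)
  · push_neg at hz
    obtain ⟨j, hj⟩ := hz
    rw [Finset.prod_eq_zero (Finset.mem_univ j) hj, Real.log_zero, neg_zero]
    exact Finset.sum_nonneg (fun j _ => hε j)
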